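/- Let Q ∈ ℝ^{n×n}, φ(x) = x^⊤ Q x, a_{i,j} := Q_{i,j} + Q_{j,i} for i ≠ j, a_{i,i} := Q_{i,i}, and S_{i,j} := Σ_{k ≠ i,j} max{0, a_{j,k} − a_{i,k}} + a_{j,j} − a_{i,i}. Let m be a positive integer and let w_{k,i} and C_k (k = 1,…,m, i = 1,…,n) be positive reals, defining the feasible set C := { x ∈ {0,1}^n : Σ_i w_{k,i} x_i ≤ C_k for all k = 1,…,m }. Let G = (V, E) be an order of the n binary variables such that for every edge (i,j) ∈ E one has S_{i,j} ≤ 0 and w_{k,i} ≥ w_{k,j} for all k = 1,…,m. Assume C is nonempty. Then min { φ(x) : x ∈ C } = min { φ(x) : x ∈ C ∩ B_n^G }; in fact, for every x ∈ C there exists x̃ ∈ C ∩ B_n^G with φ(x̃) ≤ φ(x). -/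

import Mathlib

open Finset

/-- The set of binary vectors `{0,1}^n`, as real vectors. -/
def Bset (n : ℕ) : Set (Fin n → ℝ) := {x | ∀ i, x i = 0 ∨ x i = 1}

/-- The subset of `{0,1}^n` ordered by an edge set `E`. -/
def BsetG (n : ℕ) (E : Finset (Fin n × Fin n)) : Set (Fin n → ℝ) :=
  {x | x ∈ Bset n ∧ ∀ e ∈ E, x e.1 = 1 → x e.2 = 1}

/-- The directed graph on `{1,…,n}` with edge set `E` has no directed cycle. -/
def IsAcyclicEdges (n : ℕ) (E : Finset (Fin n × Fin n)) : Prop :=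
  ∀ i : Fin n, ¬ Relation.TransGen (fun a b => (a, b) ∈ E) i i

/-- Quadratic form `x ⊤ Q x = ∑ i ∑ j Q i j * x i * x j`. -/
def quadForm (n : ℕ) (Q : Matrix (Fin n) (Fin n) ℝ) (x : Fin n → ℝ) : ℝ :=
  ∑ i, ∑ j, Q i j * x i * x j

/-- Coefficient `a_{i,j}` of `x_i x_j` (or of `x_i` if `i = j`) in `x ⊤ Q x`. -/
def aCoef (n : ℕ) (Q : Matrix (Fin n) (Fin n) ℝ) (i j : Fin n) : ℝ :=
  if i = j then Q i i else Q i j + Q j i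

/-- `S_{i,j} = ∑_{k ≠ i,j} max {0, a_{j,k} − a_{i,k}} + a_{j,j} − a_{i,i}`. -/
noncomputable def Sval (n : ℕ) (Q : Matrix (Fin n) (Fin n) ℝ) (i j : Fin n) : ℝ :=
  (∑ k ∈ univ.filter (fun k => k ≠ i ∧ k ≠ j), max 0 (aCoef n Q j k - aCoef n Q i k))
    + aCoef n Q j j - aCoef n Q i i

/-- Feasible set of the knapsack constraints:
binary vectors with `∑ i w_{k,i} x_i ≤ C_k` for every `k`. -/
def Kfeas (n m : ℕ) (w : Fin m → Fin n → ℝ) (C : Fin m → ℝ) : Set (Fin n → ℝ) :=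
  {x | x ∈ Bset n ∧ ∀ k : Fin m, (∑ i, w k i * x i) ≤ C k}

/- ---------- auxiliary material ---------- -/

lemma quad_diff (n : ℕ) (Q : Matrix (Fin n) (Fin n) ℝ) (i j : Fin n) (hij : i ≠ j)
    (x : Fin n → ℝ) (hxi : x i = 1) (hxj : x j = 0) :
    quadForm n Q (Function.update (Function.update x i 0) j 1)
      = quadForm n Q x
        + ((∑ q ∈ univ.filter (fun q => q ≠ i ∧ q ≠ j),
            ((Q j q + Q q j) - (Q i q + Q q i)) * x q) + Q j j - Q i i) := by
  set u := Function.update (Function.update x i 0) j 1 with hu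
  set v : Fin n → ℝ := fun q => (if q = j then 1 else 0) - (if q = i then 1 else 0) with hv
  have huv : ∀ q, u q = x q + v q := by
    intro q
    by_cases h1 : q = j
    · subst h1; simp [hu, hv, hxj, hij, Ne.symm hij, Function.update]
    · by_cases h2 : q = i
      · subst h2; simp [hu, hv, hxi, h1, Function.update]
      · simp [hu, hv, h1, h2, Function.update]
  have key : quadForm n Q u = quadForm n Q x
      + ((∑ p, ∑ q, Q p q * x p * v q) + (∑ p, ∑ q, Q p q * v p * x q)
        + (∑ p, ∑ q, Q p q * v p * v q)) := by
    have h1 : quadForm n Q u = ∑ p, ∑ q,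
        (Q p q * x p * x q + (Q p q * x p * v q + Q p q * v p * x q + Q p q * v p * v q)) := by
      unfold quadForm
      refine Finset.sum_congr rfl fun p _ => Finset.sum_congr rfl fun q _ => ?_
      rw [huv p, huv q]; ring
    rw [h1]
    simp only [Finset.sum_add_distrib]
    unfold quadForm; ring
  have hS1 : (∑ p, ∑ q, Q p q * x p * v q) = ∑ p, (Q p j - Q p i) * x p := by
    refine Finset.sum_congr rfl fun p _ => ?_
    simp only [hv, mul_sub, mul_ite, mul_one, mul_zero, Finset.sum_sub_distrib,
      Finset.sum_ite_eq', mem_univ, if_true]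
    ring
  have hS2 : (∑ p, ∑ q, Q p q * v p * x q) = ∑ q, (Q j q - Q i q) * x q := by
    rw [Finset.sum_comm]
    refine Finset.sum_congr rfl fun q _ => ?_
    have : ∀ p, Q p q * v p * x q = (if p = j then Q p q * x q else 0) - (if p = i then Q p q * x q else 0) := by
      intro p; simp only [hv]
      by_cases h1 : p = j <;> by_cases h2 : p = i <;>
        simp [h1, h2, hij, Ne.symm hij] <;> ring
    simp only [this, Finset.sum_sub_distrib, Finset.sum_ite_eq', mem_univ, if_true]
    ring
  have hS3 : (∑ p, ∑ q, Q p q * v p * v q) = Q j j + Q i i - Q i j - Q j i := by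
    have h3 : ∀ p, ∑ q, Q p q * v p * v q = (Q p j - Q p i) * v p := by
      intro p
      by_cases h1 : p = j <;> by_cases h2 : p = i <;>
        simp [hv, h1, h2, hij, Ne.symm hij, mul_sub, mul_ite, mul_one, mul_zero,
          Finset.sum_sub_distrib, Finset.sum_ite_eq'] <;> ring
    have h4 : ∀ p, (Q p j - Q p i) * v p
        = (if p = j then Q p j - Q p i else 0) - (if p = i then Q p j - Q p i else 0) := by
      intro p
      by_cases h1 : p = j <;> by_cases h2 : p = i <;> simp [hv, h1, h2, hij, Ne.symm hij]
    simp only [h3, h4, Finset.sum_sub_distrib, Finset.sum_ite_eq', mem_univ, if_true]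
    ring
  rw [key, hS1, hS2, hS3]
  have hcomb : (∑ p, (Q p j - Q p i) * x p) + (∑ q, (Q j q - Q i q) * x q)
      = ∑ q, ((Q j q + Q q j) - (Q i q + Q q i)) * x q := by
    rw [← Finset.sum_add_distrib]
    refine Finset.sum_congr rfl fun q _ => by ring
  rw [add_assoc, ← add_assoc (∑ p, (Q p j - Q p i) * x p), hcomb]
  have hsplit : (∑ q, ((Q j q + Q q j) - (Q i q + Q q i)) * x q)
      = (∑ q ∈ univ.filter (fun q => q ≠ i ∧ q ≠ j),
          ((Q j q + Q q j) - (Q i q + Q q i)) * x q)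
        + (Q j i + Q i j - 2 * Q i i) := by
    rw [← Finset.sum_filter_add_sum_filter_not univ (fun q => q ≠ i ∧ q ≠ j)]
    congr 1
    have : univ.filter (fun q : Fin n => ¬(q ≠ i ∧ q ≠ j)) = {i, j} := by
      ext q
      simp only [mem_filter, mem_univ, true_and, mem_insert, mem_singleton]
      tauto
    rw [this, Finset.sum_pair hij, hxi, hxj]
    ring
  rw [hsplit]
  ring

/-- quadForm after swapping is at most quadForm before, using `Sval ≤ 0`. -/
lemma quad_swap_le (n : ℕ) (Q : Matrix (Fin n) (Fin n) ℝ) (i j : Fin n) (hij : i ≠ j)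
    (x : Fin n → ℝ) (hx : x ∈ Bset n) (hxi : x i = 1) (hxj : x j = 0)
    (hS : Sval n Q i j ≤ 0) :
    quadForm n Q (Function.update (Function.update x i 0) j 1) ≤ quadForm n Q x := by
  rw [quad_diff n Q i j hij x hxi hxj]
  have hbound : (∑ q ∈ univ.filter (fun q => q ≠ i ∧ q ≠ j),
      ((Q j q + Q q j) - (Q i q + Q q i)) * x q) + Q j j - Q i i ≤ Sval n Q i j := by
    unfold Sval
    have haa : aCoef n Q j j - aCoef n Q i i = Q j j - Q i i := by
      simp [aCoef]
    have hterm : ∀ q ∈ univ.filter (fun q => q ≠ i ∧ q ≠ j),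
        ((Q j q + Q q j) - (Q i q + Q q i)) * x q
          ≤ max 0 (aCoef n Q j q - aCoef n Q i q) := by
      intro q hq
      simp only [mem_filter, mem_univ, true_and] at hq
      have ha : aCoef n Q j q - aCoef n Q i q = (Q j q + Q q j) - (Q i q + Q q i) := by
        simp [aCoef, Ne.symm hq.1, Ne.symm hq.2]
      rw [ha]
      rcases hx q with h0 | h1
      · rw [h0, mul_zero]; exact le_max_left _ _
      · rw [h1, mul_one]; exact le_max_right _ _
    have := Finset.sum_le_sum hterm
    linarith [haa, this]
  linarith

open Classical in
/-- Rank: number of vertices strictly reachable from `i`. -/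
noncomputable def rnk (n : ℕ) (E : Finset (Fin n × Fin n)) (i : Fin n) : ℕ :=
  (univ.filter (fun k => Relation.TransGen (fun a b => (a, b) ∈ E) i k)).card

lemma rnk_lt (n : ℕ) (E : Finset (Fin n × Fin n)) (hdag : IsAcyclicEdges n E)
    {i j : Fin n} (hij : (i, j) ∈ E) : rnk n E j < rnk n E i := by
  classical
  unfold rnk
  apply Finset.card_lt_card
  constructor
  · intro k hk
    simp only [mem_filter, mem_univ, true_and] at hk ⊢
    exact Relation.TransGen.head hij hk
  · intro hsub
    have hj : j ∈ univ.filter (fun k => Relation.TransGen (fun a b => (a, b) ∈ E) i k) := by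
      simp only [mem_filter, mem_univ, true_and]
      exact Relation.TransGen.single hij
    have := hsub hj
    simp only [mem_filter, mem_univ, true_and] at this
    exact hdag j this

open Classical in
/-- Potential: sum of ranks of coordinates equal to 1. -/
noncomputable def pot (n : ℕ) (E : Finset (Fin n × Fin n)) (x : Fin n → ℝ) : ℕ :=
  ∑ k ∈ univ.filter (fun k => x k = 1), rnk n E k

lemma pot_lt (n : ℕ) (E : Finset (Fin n × Fin n)) (hdag : IsAcyclicEdges n E)
    {i j : Fin n} (hij : (i, j) ∈ E) (hne : i ≠ j) (x : Fin n → ℝ)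
    (hxi : x i = 1) (hxj : x j = 0) :
    pot n E (Function.update (Function.update x i 0) j 1) < pot n E x := by
  classical
  set u := Function.update (Function.update x i 0) j 1 with hu
  have hui : u i = 0 := by simp [hu, hne, Function.update]
  have huj : u j = 1 := by simp [hu, Function.update]
  have huq : ∀ q, q ≠ i → q ≠ j → u q = x q := by
    intro q h1 h2; simp [hu, h1, h2, Function.update]
  have hset : univ.filter (fun k => u k = 1)
      = insert j ((univ.filter (fun k => x k = 1)).erase i) := by
    ext q
    simp only [mem_filter, mem_univ, true_and, mem_insert, mem_erase]
    constructor
    · intro h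
      by_cases h1 : q = j
      · exact Or.inl h1
      · by_cases h2 : q = i
        · subst h2; rw [hui] at h; norm_num at h
        · exact Or.inr ⟨h2, by rwa [huq q h2 h1] at h⟩
    · rintro (rfl | ⟨h2, h3⟩)
      · exact huj
      · by_cases h1 : q = j
        · subst h1; exact huj
        · rw [huq q h2 h1]; exact h3
  unfold pot
  rw [hset]
  have hjni : j ∉ (univ.filter (fun k => x k = 1)).erase i := by
    simp [hxj]
  rw [Finset.sum_insert hjni]
  have hi : i ∈ univ.filter (fun k => x k = 1) := by simp [hxi]
  have := Finset.add_sum_erase _ (rnk n E) hi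
  have hlt := rnk_lt n E hdag hij
  omega

theorem stmt15 (n m : ℕ) (hm : 0 < m) (Q : Matrix (Fin n) (Fin n) ℝ)
    (w : Fin m → Fin n → ℝ) (C : Fin m → ℝ)
    (hw : ∀ k i, 0 < w k i) (hC : ∀ k, 0 < C k)
    (E : Finset (Fin n × Fin n)) (hdag : IsAcyclicEdges n E)
    (hE : ∀ e ∈ E, Sval n Q e.1 e.2 ≤ 0 ∧ ∀ k : Fin m, w k e.2 ≤ w k e.1)
    (hne : (Kfeas n m w C).Nonempty) :
    sInf (quadForm n Q '' Kfeas n m w C) =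
        sInf (quadForm n Q '' (Kfeas n m w C ∩ BsetG n E)) ∧
      ∀ x ∈ Kfeas n m w C, ∃ y ∈ Kfeas n m w C ∩ BsetG n E,
        quadForm n Q y ≤ quadForm n Q x := by
  classical
  -- main construction by strong induction on the potential
  have main : ∀ N : ℕ, ∀ x ∈ Kfeas n m w C, pot n E x ≤ N →
      ∃ y ∈ Kfeas n m w C ∩ BsetG n E, quadForm n Q y ≤ quadForm n Q x := by
    intro N
    induction N with
    | zero =>
      intro x hx hpot
      by_cases hall : ∀ e ∈ E, x e.1 = 1 → x e.2 = 1
      · exact ⟨x, ⟨hx, hx.1, hall⟩, le_refl _⟩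
      · push_neg at hall
        obtain ⟨e, heE, hxi, hxj⟩ := hall
        obtain ⟨i, j⟩ := e
        have hxj0 : x j = 0 := (hx.1 j).resolve_right hxj
        have hij : i ≠ j := fun h => by rw [h, hxj0] at hxi; norm_num at hxi
        have := pot_lt n E hdag heE hij x hxi hxj0
        omega
    | succ N ih =>
      intro x hx hpot
      by_cases hall : ∀ e ∈ E, x e.1 = 1 → x e.2 = 1
      · exact ⟨x, ⟨hx, hx.1, hall⟩, le_refl _⟩
      · push_neg at hall
        obtain ⟨e, heE, hxi, hxj⟩ := hall
        obtain ⟨i, j⟩ := e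
        have hxj0 : x j = 0 := (hx.1 j).resolve_right hxj
        have hij : i ≠ j := fun h => by rw [h, hxj0] at hxi; norm_num at hxi
        set u := Function.update (Function.update x i 0) j 1 with hu
        have hui : u i = 0 := by simp [hu, hij, Function.update]
        have huj : u j = 1 := by simp [hu, Function.update]
        have huq : ∀ q, q ≠ i → q ≠ j → u q = x q := by
          intro q h1 h2; simp [hu, h1, h2, Function.update]
        have huB : u ∈ Bset n := by
          intro q
          by_cases h1 : q = j
          · subst h1; right; exact huj
          · by_cases h2 : q = i
            · subst h2; left; exact hui
            · rw [huq q h2 h1]; exact hx.1 q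
        have huK : u ∈ Kfeas n m w C := by
          refine ⟨huB, fun k => ?_⟩
          have hsum : (∑ p, w k p * u p) = (∑ p, w k p * x p) + (w k j - w k i) := by
            have hpt : ∀ p, w k p * u p = w k p * x p
                + ((if p = j then w k p else 0) - (if p = i then w k p else 0)) := by
              intro p
              by_cases h1 : p = j
              · subst h1; simp [huj, hxj0, Ne.symm hij]
              · by_cases h2 : p = i
                · subst h2; simp [hui, hxi, h1]
                · simp [huq p h2 h1, h1, h2]
            simp only [hpt, Finset.sum_add_distrib, Finset.sum_sub_distrib,
              Finset.sum_ite_eq', mem_univ, if_true]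
          rw [hsum]
          have hwk := (hE (i, j) heE).2 k
          have := hx.2 k
          linarith
        have hle : quadForm n Q u ≤ quadForm n Q x :=
          quad_swap_le n Q i j hij x hx.1 hxi hxj0 (hE (i, j) heE).1
        have hpl : pot n E u < pot n E x := pot_lt n E hdag heE hij x hxi hxj0
        obtain ⟨y, hy, hyle⟩ := ih u huK (by omega)
        exact ⟨y, hy, le_trans hyle hle⟩
  have main' : ∀ x ∈ Kfeas n m w C, ∃ y ∈ Kfeas n m w C ∩ BsetG n E,
      quadForm n Q y ≤ quadForm n Q x := fun x hx => main (pot n E x) x hx le_rfl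
  refine ⟨?_, main'⟩
  -- finiteness and boundedness
  have hBfin : (Bset n).Finite := by
    have hsub : Bset n ⊆ Set.pi Set.univ (fun _ : Fin n => ({0, 1} : Set ℝ)) := by
      intro x hx q _
      rcases hx q with h | h <;> simp [h]
    exact (Set.Finite.pi (fun _ => (Set.finite_singleton (1:ℝ)).insert 0)).subset hsub
  have hKsub : Kfeas n m w C ⊆ Bset n := fun x hx => hx.1
  have hAfin : (quadForm n Q '' Kfeas n m w C).Finite :=
    ((hBfin.subset hKsub).image _)
  have hBfin' : (quadForm n Q '' (Kfeas n m w C ∩ BsetG n E)).Finite :=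
    ((hBfin.subset (fun x hx => hKsub hx.1)).image _)
  have hAne : (quadForm n Q '' Kfeas n m w C).Nonempty := hne.image _
  obtain ⟨x0, hx0⟩ := hne
  obtain ⟨y0, hy0, _⟩ := main' x0 hx0
  have hBne : (quadForm n Q '' (Kfeas n m w C ∩ BsetG n E)).Nonempty := ⟨_, y0, hy0, rfl⟩
  apply le_antisymm
  · exact csInf_le_csInf (hAfin.bddBelow) hBne (Set.image_mono Set.inter_subset_left)
  · apply le_csInf hAne
    rintro a ⟨x, hxK, rfl⟩
    obtain ⟨y, hyK, hyle⟩ := main' x hxK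
    exact le_trans (csInf_le hBfin'.bddBelow ⟨y, hyK, rfl⟩) hyle
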